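/- Fix δ > 0 and ε > 0. There exists a policy π_ε with J_{π_ε,δ}(x) ≤ Ĵ_δ(x) + ε for all x ∈ X, and every policy π_ε satisfying this inequality is proper at every state x ∈ X̂. -/

import Mathlib

open scoped ENNReal
open Filter
open scoped Classical NNReal

/-- A stochastic shortest path (SSP) problem with state space `X`, control space `U`,
countable disturbance space `W`, a cost-free absorbing termination state `t`,
nonempty control constraint sets `Uc x ⊆ U`, disturbance distributions `P x u`,
system function `f`, and nonnegative (finite-valued) cost per stage `g`. -/
structure SSP (X U W : Type*) [Countable W] where
  t : X
  Uc : X → Set U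
  Uc_nonempty : ∀ x, (Uc x).Nonempty
  P : X → U → PMF W
  f : X → U → W → X
  g : X → U → W → ℝ≥0∞
  g_lt_top : ∀ x u w, g x u w < ⊤
  f_absorb : ∀ u ∈ Uc t, ∀ w, f t u w = t
  g_zero : ∀ u ∈ Uc t, ∀ w, g t u w = 0

namespace SSP

variable {X U W : Type*} [Countable W] (S : SSP X U W)

/-- A policy `π = (μ₀, μ₁, …)` is admissible if `μ_k(x) ∈ U(x)` for all `k, x`. -/
def IsPolicy (π : ℕ → X → U) : Prop := ∀ k x, π k x ∈ S.Uc x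

/-- Distribution of the state `x_k` after `k` steps under policy `π` starting from `x₀`. -/
noncomputable def stateDist (π : ℕ → X → U) (x₀ : X) : ℕ → PMF X
  | 0 => PMF.pure x₀
  | k + 1 => (stateDist π x₀ k).bind fun x => (S.P x (π k x)).map (S.f x (π k x))

/-- Expected value `E^π_{x₀}[J(x_k)]` of a nonnegative function along the trajectory. -/
noncomputable def expect (π : ℕ → X → U) (x₀ : X) (k : ℕ) (J : X → ℝ≥0∞) : ℝ≥0∞ :=
  ∑' x, S.stateDist π x₀ k x * J x

/-- Expected cost `E^π_{x₀}[g(x_k, μ_k(x_k), w_k)]` of the `k`-th stage. -/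
noncomputable def stageCost (π : ℕ → X → U) (x₀ : X) (k : ℕ) : ℝ≥0∞ :=
  S.expect π x₀ k fun x => ∑' w, S.P x (π k x) w * S.g x (π k x) w

/-- The cost `J_π(x₀) = Σ_{k≥0} E^π_{x₀}[g(x_k, μ_k(x_k), w_k)]` of a policy. -/
noncomputable def Jcost (π : ℕ → X → U) (x₀ : X) : ℝ≥0∞ :=
  ∑' k, S.stageCost π x₀ k

/-- `r_k(π, x₀)`: probability that `x_k ≠ t` under `π` starting from `x₀`. -/
noncomputable def r (π : ℕ → X → U) (x₀ : X) (k : ℕ) : ℝ≥0∞ :=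
  S.expect π x₀ k fun x => if x = S.t then 0 else 1

/-- `Σ_{k≥0} r_k(π,x₀)`: expected number of steps to reach the destination. -/
noncomputable def N (π : ℕ → X → U) (x₀ : X) : ℝ≥0∞ := ∑' k, S.r π x₀ k

/-- A policy is proper at `x` if it is admissible, `J_π(x) < ∞` and `Σ_k r_k(π,x) < ∞`. -/
def ProperAt (π : ℕ → X → U) (x : X) : Prop :=
  S.IsPolicy π ∧ S.Jcost π x < ⊤ ∧ S.N π x < ⊤

/-- The optimal cost function `J*`. -/
noncomputable def Jstar (x : X) : ℝ≥0∞ := ⨅ π ∈ {π | S.IsPolicy π}, S.Jcost π x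

/-- The restricted optimal cost function `Ĵ` over policies proper at `x`
(infimum over the empty set is `∞`). -/
noncomputable def Jhat (x : X) : ℝ≥0∞ := ⨅ π ∈ {π | S.ProperAt π x}, S.Jcost π x

/-- The effective domain `X̂ = {x | Ĵ(x) < ∞}` of `Ĵ`. -/
def Xhat : Set X := {x | S.Jhat x < ⊤}

/-- Expected `k`-th stage cost in the `δ`-perturbed problem (stage cost `g + δ` off `t`). -/
noncomputable def stageCostPert (δ : ℝ≥0∞) (π : ℕ → X → U) (x₀ : X) (k : ℕ) : ℝ≥0∞ :=
  S.expect π x₀ k fun x =>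
    ∑' w, S.P x (π k x) w * (S.g x (π k x) w + if x = S.t then 0 else δ)

/-- The cost `J_{π,δ}` of a policy in the `δ`-perturbed problem. -/
noncomputable def Jpert (δ : ℝ≥0∞) (π : ℕ → X → U) (x₀ : X) : ℝ≥0∞ :=
  ∑' k, S.stageCostPert δ π x₀ k

/-- The optimal cost function `Ĵ_δ` of the `δ`-perturbed problem. -/
noncomputable def JhatPert (δ : ℝ≥0∞) (x : X) : ℝ≥0∞ :=
  ⨅ π ∈ {π | S.IsPolicy π}, S.Jpert δ π x

/-- `Q J x u = E_{w∼P(·|x,u)}[g(x,u,w) + J(f(x,u,w))]`. -/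
noncomputable def Q (J : X → ℝ≥0∞) (x : X) (u : U) : ℝ≥0∞ :=
  ∑' w, S.P x u w * (S.g x u w + J (S.f x u w))

/-- The Bellman operator `(TJ)(x) = inf_{u ∈ U(x)} E[g(x,u,w) + J(f(x,u,w))]`. -/
noncomputable def bellman (J : X → ℝ≥0∞) (x : X) : ℝ≥0∞ := ⨅ u ∈ S.Uc x, S.Q J x u

/-- The tail policy `π_k = (μ_k, μ_{k+1}, …)`. -/
def tail (π : ℕ → X → U) (k : ℕ) : ℕ → X → U := fun m => π (k + m)

/-- The set `Ŵ` of functions `J` with `J(t) = 0`, `Ĵ ≤ J`, and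
`E^π_{x₀}[J(x_k)] → 0` for every pair `(π, x₀)` with `π` proper at `x₀`. -/
def What : Set (X → ℝ≥0∞) :=
  {J | J S.t = 0 ∧ S.Jhat ≤ J ∧
    ∀ π x₀, S.ProperAt π x₀ → Tendsto (fun k => S.expect π x₀ k J) atTop (nhds 0)}

/-- The set `B` of functions `J` with `J(t) = 0` that are bounded over `X̂`. -/
def Bset : Set (X → ℝ≥0∞) :=
  {J | J S.t = 0 ∧ (⨆ x ∈ S.Xhat, J x) < ⊤}

/-- A policy is uniformly proper if it is admissible and the expected number of steps
to reach the destination is uniformly bounded over `X̂`. -/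
def UniformlyProper (π : ℕ → X → U) : Prop :=
  S.IsPolicy π ∧ (⨆ x ∈ S.Xhat, S.N π x) < ⊤

/-- The cost per stage `g` is (uniformly) bounded over `X × U × W`. -/
def BoundedCost : Prop := ∃ b : ℝ≥0∞, b < ⊤ ∧ ∀ x u w, S.g x u w ≤ b

-- auxiliary lemmas

lemma tail_isPolicy {π : ℕ → X → U} (h : S.IsPolicy π) (j : ℕ) :
    S.IsPolicy (SSP.tail π j) := fun k x => h (j + k) x

lemma tail_tail (π : ℕ → X → U) (j : ℕ) : SSP.tail (SSP.tail π j) 1 = SSP.tail π (j + 1) := by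
  funext m x
  simp [tail, Nat.add_assoc]

lemma stateDist_succ' (π : ℕ → X → U) (x : X) (k : ℕ) :
    S.stateDist π x (k + 1) =
      (S.P x (π 0 x)).bind fun w => S.stateDist (SSP.tail π 1) (S.f x (π 0 x) w) k := by
  induction k with
  | zero =>
      simp only [stateDist, PMF.pure_bind, PMF.map, SSP.tail]
      rfl
  | succ k ih =>
      show (S.stateDist π x (k+1)).bind _ = _
      rw [ih, PMF.bind_bind]
      congr 1
      funext w
      show _ = S.stateDist (SSP.tail π 1) (S.f x (π 0 x) w) (k+1)
      show _ = (S.stateDist (SSP.tail π 1) _ k).bind _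
      congr 1
      funext y
      simp [tail, Nat.add_comm]

lemma expect_zero (π : ℕ → X → U) (x : X) (J : X → ℝ≥0∞) : S.expect π x 0 J = J x := by
  unfold expect stateDist
  rw [tsum_eq_single x]
  · simp
  · intro y hy; simp [PMF.pure_apply, hy]

lemma expect_succ (π : ℕ → X → U) (x : X) (k : ℕ) (J : X → ℝ≥0∞) :
    S.expect π x (k + 1) J =
      ∑' w, S.P x (π 0 x) w * S.expect (SSP.tail π 1) (S.f x (π 0 x) w) k J := by
  unfold expect
  rw [stateDist_succ']
  simp only [PMF.bind_apply]
  calc ∑' y, (∑' w, S.P x (π 0 x) w * S.stateDist (tail π 1) (S.f x (π 0 x) w) k y) * J y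
      = ∑' y, ∑' w, S.P x (π 0 x) w * S.stateDist (tail π 1) (S.f x (π 0 x) w) k y * J y := by
        congr 1; funext y; rw [← ENNReal.tsum_mul_right]
    _ = ∑' w, ∑' y, S.P x (π 0 x) w * S.stateDist (tail π 1) (S.f x (π 0 x) w) k y * J y :=
        ENNReal.tsum_comm
    _ = ∑' w, S.P x (π 0 x) w * ∑' y, S.stateDist (tail π 1) (S.f x (π 0 x) w) k y * J y := by
        congr 1; funext w
        rw [← ENNReal.tsum_mul_left]
        congr 1; funext y; ring


lemma expect_mono (π : ℕ → X → U) (x : X) (k : ℕ) {J J' : X → ℝ≥0∞} (h : ∀ y, J y ≤ J' y) :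
    S.expect π x k J ≤ S.expect π x k J' :=
  ENNReal.tsum_le_tsum fun y => mul_le_mul_of_nonneg_left (h y) zero_le'

lemma stagePert_zero (δ : ℝ≥0∞) (π : ℕ → X → U) (x : X) :
    S.stageCostPert δ π x 0 =
      ∑' w, S.P x (π 0 x) w * (S.g x (π 0 x) w + if x = S.t then 0 else δ) :=
  S.expect_zero π x _

lemma stagePert_succ (δ : ℝ≥0∞) (π : ℕ → X → U) (x : X) (k : ℕ) :
    S.stageCostPert δ π x (k + 1) =
      ∑' w, S.P x (π 0 x) w * S.stageCostPert δ (tail π 1) (S.f x (π 0 x) w) k := by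
  unfold stageCostPert
  rw [expect_succ]
  congr 1
  funext w
  congr 1
  unfold expect
  congr 1
  funext y
  simp [SSP.tail, Nat.add_comm]

lemma Jpert_succ (δ : ℝ≥0∞) (π : ℕ → X → U) (x : X) :
    S.Jpert δ π x = ∑' w, S.P x (π 0 x) w *
      ((S.g x (π 0 x) w + if x = S.t then 0 else δ) +
        S.Jpert δ (tail π 1) (S.f x (π 0 x) w)) := by
  unfold Jpert
  rw [tsum_eq_zero_add' ENNReal.summable, stagePert_zero]
  simp only [stagePert_succ]
  rw [ENNReal.tsum_comm (f := fun k w => S.P x (π 0 x) w *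
      S.stageCostPert δ (tail π 1) (S.f x (π 0 x) w) k)]
  rw [← ENNReal.tsum_add]
  congr 1
  funext w
  rw [ENNReal.tsum_mul_left, ← mul_add]

lemma expect_add (π : ℕ → X → U) (x : X) (k : ℕ) (J J' : X → ℝ≥0∞) :
    S.expect π x k (fun y => J y + J' y) = S.expect π x k J + S.expect π x k J' := by
  unfold expect
  rw [← ENNReal.tsum_add]
  congr 1; funext y; rw [mul_add]

lemma stagePert_eq (δ : ℝ≥0∞) (π : ℕ → X → U) (x : X) (k : ℕ) :
    S.stageCostPert δ π x k = S.stageCost π x k + δ * S.r π x k := by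
  unfold stageCostPert
  have h : ∀ y : X, (∑' w, S.P y (π k y) w * (S.g y (π k y) w + if y = S.t then 0 else δ)) =
      (∑' w, S.P y (π k y) w * S.g y (π k y) w) + δ * (if y = S.t then 0 else 1) := by
    intro y
    rw [show (fun w => S.P y (π k y) w * (S.g y (π k y) w + if y = S.t then 0 else δ)) =
        fun w => S.P y (π k y) w * S.g y (π k y) w +
          S.P y (π k y) w * (if y = S.t then 0 else δ) from funext fun w => mul_add _ _ _]
    rw [ENNReal.tsum_add]
    congr 1
    rw [ENNReal.tsum_mul_right, PMF.tsum_coe, one_mul]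
    by_cases hy : y = S.t <;> simp [hy]
  rw [show (fun y => ∑' w, S.P y (π k y) w * (S.g y (π k y) w + if y = S.t then 0 else δ)) =
      fun y => (∑' w, S.P y (π k y) w * S.g y (π k y) w) + δ * (if y = S.t then 0 else 1)
      from funext h]
  rw [expect_add]
  congr 1
  unfold r expect
  rw [← ENNReal.tsum_mul_left]
  congr 1; funext y; ring

lemma Jpert_eq (δ : ℝ≥0∞) (π : ℕ → X → U) (x : X) :
    S.Jpert δ π x = S.Jcost π x + δ * S.N π x := by
  unfold Jpert Jcost N
  simp only [stagePert_eq]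
  rw [ENNReal.tsum_add, ENNReal.tsum_mul_left]


lemma tail_zero (π : ℕ → X → U) : tail π 0 = π := by funext m x; simp [SSP.tail]

noncomputable def Qpert (δ : ℝ≥0∞) (J : X → ℝ≥0∞) (x : X) (u : U) : ℝ≥0∞ :=
  ∑' w, S.P x u w * ((S.g x u w + if x = S.t then 0 else δ) + J (S.f x u w))

lemma Qpert_le_Jpert (δ : ℝ≥0∞) {π : ℕ → X → U} (hπ : S.IsPolicy π) (x : X) :
    S.Qpert δ (S.JhatPert δ) x (π 0 x) ≤ S.Jpert δ π x := by
  rw [Jpert_succ]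
  refine ENNReal.tsum_le_tsum fun w => mul_le_mul_of_nonneg_left (add_le_add_right ?_ _) zero_le'
  exact iInf₂_le (tail π 1) (S.tail_isPolicy hπ 1)

lemma bellman_le (δ : ℝ≥0∞) (x : X) :
    (⨅ u ∈ S.Uc x, S.Qpert δ (S.JhatPert δ) x u) ≤ S.JhatPert δ x := by
  refine le_iInf₂ fun π hπ => ?_
  exact le_trans (iInf₂_le (π 0 x) (hπ 0 x)) (S.Qpert_le_Jpert δ hπ x)

lemma exists_greedy (δ : ℝ≥0∞) {c : ℝ≥0∞} (hc : c ≠ 0) (x : X) :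
    ∃ u ∈ S.Uc x, S.Qpert δ (S.JhatPert δ) x u ≤ S.JhatPert δ x + c := by
  by_cases h : S.JhatPert δ x = ⊤
  · obtain ⟨u, hu⟩ := S.Uc_nonempty x
    exact ⟨u, hu, by simp [h]⟩
  · have hlt : (⨅ u ∈ S.Uc x, S.Qpert δ (S.JhatPert δ) x u) < S.JhatPert δ x + c :=
      lt_of_le_of_lt (S.bellman_le δ x) (ENNReal.lt_add_right h hc)
    obtain ⟨u, hu2⟩ := iInf_lt_iff.mp hlt
    obtain ⟨hu, hle⟩ := iInf_lt_iff.mp hu2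
    exact ⟨u, hu, hle.le⟩

lemma key (δ : ℝ≥0∞) (π : ℕ → X → U) (tol : ℕ → ℝ≥0∞)
    (hgreedy : ∀ k x, S.Qpert δ (S.JhatPert δ) x (π k x) ≤ S.JhatPert δ x + tol k) :
    ∀ k j x, (∑ i ∈ Finset.range k, S.stageCostPert δ (tail π j) x i) +
      S.expect (tail π j) x k (S.JhatPert δ) ≤
        S.JhatPert δ x + ∑ i ∈ Finset.range k, tol (j + i) := by
  intro k
  induction k with
  | zero => intro j x; simp [expect_zero]
  | succ k ih =>
    intro j x
    calc (∑ i ∈ Finset.range (k+1), S.stageCostPert δ (tail π j) x i) +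
          S.expect (tail π j) x (k+1) (S.JhatPert δ)
        = ((∑ i ∈ Finset.range k, S.stageCostPert δ (tail π j) x (i+1)) +
            S.stageCostPert δ (tail π j) x 0) + S.expect (tail π j) x (k+1) (S.JhatPert δ) := by
          rw [Finset.sum_range_succ']
      _ = ((∑ i ∈ Finset.range k, ∑' w, S.P x (tail π j 0 x) w *
              S.stageCostPert δ (tail π (j+1)) (S.f x (tail π j 0 x) w) i) +
            (∑' w, S.P x (tail π j 0 x) w *
              (S.g x (tail π j 0 x) w + if x = S.t then 0 else δ))) +
          ∑' w, S.P x (tail π j 0 x) w *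
            S.expect (tail π (j+1)) (S.f x (tail π j 0 x) w) k (S.JhatPert δ) := by
          rw [stagePert_zero, expect_succ]
          simp only [stagePert_succ, tail_tail]
      _ = ∑' w, S.P x (tail π j 0 x) w *
            ((S.g x (tail π j 0 x) w + if x = S.t then 0 else δ) +
             ((∑ i ∈ Finset.range k, S.stageCostPert δ (tail π (j+1)) (S.f x (tail π j 0 x) w) i) +
              S.expect (tail π (j+1)) (S.f x (tail π j 0 x) w) k (S.JhatPert δ))) := by
          rw [← Summable.tsum_finsetSum (fun i _ => ENNReal.summable), ← ENNReal.tsum_add, ← ENNReal.tsum_add]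
          congr 1
          funext w
          rw [← Finset.mul_sum]
          ring
      _ ≤ ∑' w, S.P x (tail π j 0 x) w *
            ((S.g x (tail π j 0 x) w + if x = S.t then 0 else δ) +
             (S.JhatPert δ (S.f x (tail π j 0 x) w) + ∑ i ∈ Finset.range k, tol ((j+1) + i))) := by
          exact ENNReal.tsum_le_tsum fun w =>
            mul_le_mul_of_nonneg_left (add_le_add_right (ih (j+1) _) _) zero_le'
      _ = S.Qpert δ (S.JhatPert δ) x (tail π j 0 x) + ∑ i ∈ Finset.range k, tol ((j+1) + i) := by
          unfold Qpert
          simp only [← add_assoc, mul_add]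
          rw [ENNReal.tsum_add, ENNReal.tsum_mul_right, PMF.tsum_coe, one_mul]
      _ ≤ (S.JhatPert δ x + tol (j + 0)) + ∑ i ∈ Finset.range k, tol ((j+1) + i) := by
          refine add_le_add_left ?_ _
          have := hgreedy (j + 0) x
          simpa [SSP.tail] using this
      _ = S.JhatPert δ x + ∑ i ∈ Finset.range (k+1), tol (j + i) := by
          rw [Finset.sum_range_succ']
          have h1 : ∑ i ∈ Finset.range k, tol ((j+1) + i) =
              ∑ i ∈ Finset.range k, tol (j + (i+1)) :=
            Finset.sum_congr rfl fun i _ => by rw [show (j+1) + i = j + (i+1) by omega]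
          rw [h1]; ring

end SSP

/-- For fixed `δ > 0`, `ε > 0`, there exists an `ε`-optimal policy for the
`δ`-perturbed problem, and every such policy is proper at every `x ∈ X̂`. -/
theorem eps_optimal_perturbed_exists_and_proper {X U W : Type*} [Countable W] (S : SSP X U W)
    (δ ε : ℝ≥0) (hδ : 0 < δ) (hε : 0 < ε) :
    (∃ πε : ℕ → X → U, S.IsPolicy πε ∧
        ∀ x, S.Jpert (δ : ℝ≥0∞) πε x ≤ S.JhatPert (δ : ℝ≥0∞) x + (ε : ℝ≥0∞)) ∧
    (∀ πε : ℕ → X → U, S.IsPolicy πε →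
      (∀ x, S.Jpert (δ : ℝ≥0∞) πε x ≤ S.JhatPert (δ : ℝ≥0∞) x + (ε : ℝ≥0∞)) →
      ∀ x ∈ S.Xhat, S.ProperAt πε x) := by
  constructor
  · have hg : ∀ (k : ℕ) (x : X), ∃ u ∈ S.Uc x,
        S.Qpert (δ : ℝ≥0∞) (S.JhatPert (δ : ℝ≥0∞)) x u ≤
          S.JhatPert (δ : ℝ≥0∞) x + (ε : ℝ≥0∞) * (2⁻¹) ^ (k + 1) := by
      intro k x
      refine S.exists_greedy _ ?_ x
      have h1 : (ε : ℝ≥0∞) ≠ 0 := by exact_mod_cast hε.ne'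
      have h2 : ((2 : ℝ≥0∞)⁻¹) ^ (k + 1) ≠ 0 :=
        pow_ne_zero _ (ENNReal.inv_ne_zero.mpr ENNReal.ofNat_ne_top)
      exact mul_ne_zero h1 h2
    choose πε hmem hle using hg
    refine ⟨πε, fun k x => hmem k x, fun x => ?_⟩
    have hkey := S.key (δ : ℝ≥0∞) πε (fun k => (ε : ℝ≥0∞) * (2⁻¹) ^ (k + 1)) hle
    have hsum : ∀ n : ℕ, ∑ i ∈ Finset.range n, (ε : ℝ≥0∞) * (2⁻¹) ^ (i + 1) ≤ (ε : ℝ≥0∞) := by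
      intro n
      calc ∑ i ∈ Finset.range n, (ε : ℝ≥0∞) * (2⁻¹) ^ (i + 1)
          ≤ ∑' i : ℕ, (ε : ℝ≥0∞) * (2⁻¹) ^ (i + 1) := ENNReal.sum_le_tsum _
        _ = (ε : ℝ≥0∞) * ∑' i : ℕ, ((2 : ℝ≥0∞)⁻¹) ^ (i + 1) := ENNReal.tsum_mul_left
        _ = (ε : ℝ≥0∞) := by
            rw [ENNReal.tsum_geometric_add_one, ENNReal.one_sub_inv_two, inv_inv,
              ENNReal.inv_mul_cancel two_ne_zero ENNReal.ofNat_ne_top, mul_one]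
    rw [SSP.Jpert, ENNReal.tsum_eq_iSup_nat]
    refine iSup_le fun n => ?_
    have h0 := hkey n 0 x
    rw [SSP.tail_zero πε] at h0
    simp only [Nat.zero_add] at h0
    calc ∑ i ∈ Finset.range n, S.stageCostPert (δ : ℝ≥0∞) πε x i
        ≤ (∑ i ∈ Finset.range n, S.stageCostPert (δ : ℝ≥0∞) πε x i) +
            S.expect πε x n (S.JhatPert (δ : ℝ≥0∞)) := le_add_right le_rfl
      _ ≤ S.JhatPert (δ : ℝ≥0∞) x + ∑ i ∈ Finset.range n, (ε : ℝ≥0∞) * (2⁻¹) ^ (i + 1) := h0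
      _ ≤ S.JhatPert (δ : ℝ≥0∞) x + (ε : ℝ≥0∞) := add_le_add_right (hsum n) _
  · intro πε hpol hle x hx
    have hx' : S.Jhat x < ⊤ := hx
    obtain ⟨π', hπ'⟩ : ∃ π', S.ProperAt π' x := by
      by_contra h
      push_neg at h
      have htop : S.Jhat x = ⊤ := by simp [SSP.Jhat, h]
      rw [htop] at hx'
      exact absurd hx' (lt_irrefl ⊤)
    have hfin' : S.Jpert (δ : ℝ≥0∞) π' x < ⊤ := by
      rw [S.Jpert_eq]
      exact ENNReal.add_lt_top.mpr ⟨hπ'.2.1, ENNReal.mul_lt_top ENNReal.coe_lt_top hπ'.2.2⟩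
    have h1 : S.JhatPert (δ : ℝ≥0∞) x < ⊤ := lt_of_le_of_lt (iInf₂_le π' hπ'.1) hfin'
    have h2 : S.Jpert (δ : ℝ≥0∞) πε x < ⊤ :=
      lt_of_le_of_lt (hle x) (ENNReal.add_lt_top.mpr ⟨h1, ENNReal.coe_lt_top⟩)
    rw [S.Jpert_eq] at h2
    have hδN := (ENNReal.add_lt_top.mp h2).2
    have hN : S.N πε x < ⊤ := by
      by_contra h
      rw [not_lt, top_le_iff] at h
      rw [h, ENNReal.mul_top (by exact_mod_cast hδ.ne' : (δ : ℝ≥0∞) ≠ 0)] at hδN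
      exact absurd hδN (lt_irrefl ⊤)
    exact ⟨hpol, (ENNReal.add_lt_top.mp h2).1, hN⟩
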